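/- Let μ be a nonzero finite positive measure on a set Ω and let (f_n) be a uniformly bounded sequence in L^∞(μ), viewed as a sequence in L^1(μ). If every subsequence of (f_n) has a constant function as an L^1-norm limit point, then for all disjoint compact sets A, B ⊆ ℂ one has lim_{n→∞} μ(f_n^{-1}(A)) · μ(f_n^{-1}(B)) = 0. -/

import Mathlib

open MeasureTheory Filter Set

lemma aux_tendsto_meas {Ω : Type*} [MeasurableSpace Ω] (μ : Measure Ω) [IsFiniteMeasure μ]
    (g : ℕ → Ω → ℂ) (hg : ∀ k, Measurable (g k)) (C : ℝ) (hbd : ∀ k x, ‖g k x‖ ≤ C)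
    (c : ℂ) (hint : Tendsto (fun k => ∫ x, ‖g k x - c‖ ∂μ) atTop (nhds 0))
    (S : Set ℂ) (hSm : MeasurableSet S) (r : ℝ) (hr : 0 < r) (hS : ∀ a ∈ S, r ≤ ‖a - c‖) :
    Tendsto (fun k => (μ (g k ⁻¹' S)).toReal) atTop (nhds 0) := by
  have hInt : ∀ k, Integrable (fun x => ‖g k x - c‖) μ := by
    intro k
    refine ⟨((hg k).sub_const c).norm.aestronglyMeasurable, ?_⟩
    refine HasFiniteIntegral.of_bounded (C := C + ‖c‖) (ae_of_all μ fun x => ?_)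
    rw [norm_norm]
    exact (norm_sub_le _ _).trans (add_le_add_left (hbd k x) _)
  have hle : ∀ k, (μ (g k ⁻¹' S)).toReal ≤ r⁻¹ * ∫ x, ‖g k x - c‖ ∂μ := by
    intro k
    have hms : MeasurableSet (g k ⁻¹' S) := (hg k) hSm
    have h1 : r * (μ (g k ⁻¹' S)).toReal ≤ ∫ x in g k ⁻¹' S, ‖g k x - c‖ ∂μ := by
      refine setIntegral_ge_of_const_le_real hms (measure_ne_top μ _) (fun x hx => hS _ hx)
        ((hInt k).integrableOn)
    have h2 : ∫ x in g k ⁻¹' S, ‖g k x - c‖ ∂μ ≤ ∫ x, ‖g k x - c‖ ∂μ :=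
      setIntegral_le_integral (hInt k) (ae_of_all μ fun x => norm_nonneg _)
    rw [le_inv_mul_iff₀ hr]
    exact h1.trans h2
  have h0 : Tendsto (fun k => r⁻¹ * ∫ x, ‖g k x - c‖ ∂μ) atTop (nhds 0) := by
    simpa using hint.const_mul r⁻¹
  exact tendsto_of_tendsto_of_tendsto_of_le_of_le tendsto_const_nhds h0
    (fun k => ENNReal.toReal_nonneg) hle

/-- If every subsequence of a uniformly bounded sequence `(f n)` in `L^∞(μ)` has a constant
function as an `L¹(μ)`-norm limit point, then for all disjoint compact sets `A, B ⊆ ℂ` the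
product `μ(f n ⁻¹ A) · μ(f n ⁻¹ B)` tends to `0`. -/
theorem stmt0 {Ω : Type*} [MeasurableSpace Ω] (μ : Measure Ω) [IsFiniteMeasure μ]
    (hμ : μ ≠ 0) (f : ℕ → Ω → ℂ) (hmeas : ∀ n, Measurable (f n))
    (C : ℝ) (hbd : ∀ n x, ‖f n x‖ ≤ C)
    (hconst : ∀ φ : ℕ → ℕ, StrictMono φ →
      ∃ c : ℂ, ∃ ψ : ℕ → ℕ, StrictMono ψ ∧
        Tendsto (fun k => ∫ x, ‖f (φ (ψ k)) x - c‖ ∂μ) atTop (nhds 0)) :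
    ∀ A B : Set ℂ, IsCompact A → IsCompact B → Disjoint A B →
      Tendsto (fun n => (μ (f n ⁻¹' A)).toReal * (μ (f n ⁻¹' B)).toReal)
        atTop (nhds 0) := by
  intro A B hA hB hAB
  set P : ℕ → ℝ := fun n => (μ (f n ⁻¹' A)).toReal * (μ (f n ⁻¹' B)).toReal with hP
  by_contra hcon
  rw [Metric.tendsto_atTop] at hcon
  push_neg at hcon
  obtain ⟨ε, hε, hfreq⟩ := hcon
  obtain ⟨φ, hφ, hφP⟩ := extraction_of_frequently_atTop (frequently_atTop.2 fun N => by
    obtain ⟨n, hn, h⟩ := hfreq N; exact ⟨n, hn, h⟩)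
  obtain ⟨c, ψ, hψ, hint⟩ := hconst φ hφ
  -- distance separation
  obtain ⟨δ, hδ, hdisj⟩ := hAB.exists_thickenings hA hB.isClosed
  have hsep : (∀ a ∈ A, δ ≤ ‖a - c‖) ∨ (∀ b ∈ B, δ ≤ ‖b - c‖) := by
    by_contra h
    push_neg at h
    obtain ⟨⟨a, ha, ha2⟩, ⟨b, hb, hb2⟩⟩ := h
    have hca : c ∈ Metric.thickening δ A :=
      Metric.mem_thickening_iff.2 ⟨a, ha, by rwa [dist_comm, Complex.dist_eq]⟩
    have hcb : c ∈ Metric.thickening δ B :=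
      Metric.mem_thickening_iff.2 ⟨b, hb, by rwa [dist_comm, Complex.dist_eq]⟩
    exact (disjoint_left.1 hdisj) hca hcb
  set g : ℕ → Ω → ℂ := fun k => f (φ (ψ k)) with hg
  have hgm : ∀ k, Measurable (g k) := fun k => hmeas _
  have hgbd : ∀ k x, ‖g k x‖ ≤ C := fun k x => hbd _ _
  have hM : ∀ n (S : Set ℂ), (μ (f n ⁻¹' S)).toReal ≤ (μ univ).toReal := fun n S =>
    ENNReal.toReal_mono (measure_ne_top μ _) (measure_mono (subset_univ _))
  have hprod : Tendsto (fun k => P (φ (ψ k))) atTop (nhds 0) := by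
    rcases hsep with hsA | hsB
    · have h1 := aux_tendsto_meas μ g hgm C hgbd c hint A hA.measurableSet δ hδ hsA
      have h2 : Tendsto (fun k => (μ (g k ⁻¹' A)).toReal * (μ univ).toReal) atTop (nhds 0) := by
        simpa using h1.mul_const (μ univ).toReal
      refine tendsto_of_tendsto_of_tendsto_of_le_of_le tendsto_const_nhds h2
        (fun k => mul_nonneg ENNReal.toReal_nonneg ENNReal.toReal_nonneg)
        (fun k => mul_le_mul_of_nonneg_left (hM _ _) ENNReal.toReal_nonneg)
    · have h1 := aux_tendsto_meas μ g hgm C hgbd c hint B hB.measurableSet δ hδ hsB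
      have h2 : Tendsto (fun k => (μ univ).toReal * (μ (g k ⁻¹' B)).toReal) atTop (nhds 0) := by
        simpa using h1.const_mul (μ univ).toReal
      refine tendsto_of_tendsto_of_tendsto_of_le_of_le tendsto_const_nhds h2
        (fun k => mul_nonneg ENNReal.toReal_nonneg ENNReal.toReal_nonneg)
        (fun k => mul_le_mul_of_nonneg_right (hM _ _) ENNReal.toReal_nonneg)
  have := (Metric.tendsto_atTop.1 hprod ε hε)
  obtain ⟨N, hN⟩ := this
  exact absurd (hφP (ψ N)) (not_le.2 (by simpa [dist_zero_right] using hN N le_rfl))
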